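/- Let R be any commutative ring. Then there exists a faithfully flat ring homomorphism R → S such that S/pS is a semiperfect F_p-algebra (i.e. the Frobenius endomorphism of S/pS is surjective). -/

import Mathlib

set_option synthInstance.maxHeartbeats 1000000
set_option maxHeartbeats 1000000

open Finsupp AddMonoidAlgebra

namespace St3

variable {R : Type} [CommRing R]

/-- fractional part of a nonneg rational -/
def frQ (q : ℚ≥0) : ℚ≥0 := q - ⌊q⌋₊

lemma frQ_zero : frQ 0 = 0 := by simp [frQ]

lemma frQ_lt_one (q : ℚ≥0) : frQ q < 1 := by
  have h : (⌊q⌋₊ : ℚ≥0) ≤ q := Nat.floor_le (show (0:ℚ≥0) ≤ q from zero_le)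
  have h2 := Nat.lt_floor_add_one q
  unfold frQ
  rw [tsub_lt_iff_left h]
  exact h2

lemma frQ_add_one (q : ℚ≥0) : frQ (q + 1) = frQ q := by
  unfold frQ
  rw [Nat.floor_add_one (show (0:ℚ≥0) ≤ q from zero_le)]
  push_cast
  rw [add_comm (⌊q⌋₊:ℚ≥0) 1, ← tsub_tsub, add_tsub_cancel_right]

lemma frQ_of_lt_one {q : ℚ≥0} (h : q < 1) : frQ q = q := by
  unfold frQ
  rw [Nat.floor_eq_zero.2 h]
  simp


lemma floorQ_add_one (q : ℚ≥0) : ⌊q + 1⌋₊ = ⌊q⌋₊ + 1 := Nat.floor_add_one (show (0:ℚ≥0) ≤ q from zero_le)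

/-- exponent monoid -/
abbrev M (R : Type) [CommRing R] := R →₀ ℚ≥0

noncomputable def frM (μ : M R) : M R := μ.mapRange frQ frQ_zero

noncomputable def intM (μ : M R) : R →₀ ℕ := μ.mapRange Nat.floor Nat.floor_zero

noncomputable def cM (μ : M R) : R := (intM μ).prod fun r n => r ^ n

lemma intM_apply (μ : M R) (r : R) : intM μ r = ⌊μ r⌋₊ := rfl

lemma frM_apply (μ : M R) (r : R) : frM μ r = frQ (μ r) := rfl

lemma frM_lt_one (μ : M R) (r : R) : frM μ r < 1 := frQ_lt_one _

lemma frM_add_single (μ : M R) (r : R) : frM (μ + Finsupp.single r 1) = frM μ := by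
  ext s
  rw [frM_apply, frM_apply, Finsupp.add_apply]
  by_cases h : s = r
  · subst h; rw [Finsupp.single_eq_same, frQ_add_one]
  · rw [Finsupp.single_eq_of_ne' fun hh => h hh.symm, add_zero]

lemma intM_add_single (μ : M R) (r : R) :
    intM (μ + Finsupp.single r 1) = intM μ + Finsupp.single r 1 := by
  ext s
  rw [Finsupp.add_apply, intM_apply, intM_apply, Finsupp.add_apply]
  by_cases h : s = r
  · subst h; rw [Finsupp.single_eq_same, Finsupp.single_eq_same, floorQ_add_one]
  · rw [Finsupp.single_eq_of_ne' fun hh => h hh.symm,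
      Finsupp.single_eq_of_ne' fun hh => h hh.symm, add_zero, add_zero]

lemma cM_prodhom (d e : R →₀ ℕ) :
    (d + e).prod (fun r n => r ^ n) = d.prod (fun r n => r ^ n) * e.prod (fun r n => r ^ n) :=
  Finsupp.prod_add_index' (fun _ => pow_zero _) (fun a m n => pow_add a m n)

lemma cM_add_single (μ : M R) (r : R) : cM (μ + Finsupp.single r 1) = cM μ * r := by
  unfold cM
  rw [intM_add_single, cM_prodhom]
  congr 1
  rw [Finsupp.prod_single_index (pow_zero r), pow_one]

lemma frM_of_frac {μ : M R} (h : ∀ r, μ r < 1) : frM μ = μ := by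
  ext s; rw [frM_apply, frQ_of_lt_one (h s)]

lemma cM_of_frac {μ : M R} (h : ∀ r, μ r < 1) : cM μ = 1 := by
  have : intM μ = 0 := by
    ext s
    show ⌊μ s⌋₊ = 0
    exact Nat.floor_eq_zero.2 (h s)
  unfold cM
  rw [this, Finsupp.prod_zero_index]


variable (R)

abbrev A : Type := AddMonoidAlgebra R (M R)

noncomputable def J : Ideal (A R) :=
  Ideal.span (Set.range fun r : R =>
    (AddMonoidAlgebra.single (Finsupp.single r 1) 1 : A R) -
      AddMonoidAlgebra.single 0 r)

abbrev S : Type := A R ⧸ J R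

noncomputable def mkS : A R →ₐ[R] S R := Ideal.Quotient.mkₐ R (J R)

variable {R}

lemma algebraMap_A (r : R) :
    algebraMap R (A R) r = AddMonoidAlgebra.single 0 r := rfl

lemma relS (r : R) :
    mkS R (AddMonoidAlgebra.single (Finsupp.single r 1) 1) = algebraMap R (S R) r := by
  rw [← (mkS R).commutes r, algebraMap_A, mkS, Ideal.Quotient.mkₐ_eq_mk,
    Ideal.Quotient.eq]
  exact Ideal.subset_span ⟨r, rfl⟩

lemma key_aux : ∀ n (μ : M R), (intM μ).sum (fun _ k => k) = n →
    mkS R (AddMonoidAlgebra.single μ 1) =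
      cM μ • mkS R (AddMonoidAlgebra.single (frM μ) 1) := by
  intro n
  induction n using Nat.strong_induction_on with
  | _ n IH =>
    intro μ hn
    by_cases h0 : intM μ = 0
    · have hfr : ∀ r, μ r < 1 := fun r => by
        have h1 : intM μ r = 0 := by rw [h0]; rfl
        rw [intM_apply] at h1
        exact Nat.floor_eq_zero.1 h1
      rw [frM_of_frac hfr, cM_of_frac hfr, one_smul]
    · obtain ⟨r, hr⟩ : ∃ r, intM μ r ≠ 0 := by
        by_contra hc
        push_neg at hc
        exact h0 (Finsupp.ext hc)
      have hr1 : (1 : ℚ≥0) ≤ μ r := by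
        rw [intM_apply] at hr
        exact Nat.floor_pos.1 (Nat.pos_of_ne_zero hr)
      set μ' := μ - Finsupp.single r 1 with hμ'
      have hsum : μ' + Finsupp.single r 1 = μ := by
        ext s
        rw [Finsupp.add_apply, hμ', Finsupp.tsub_apply]
        by_cases h : s = r
        · subst h
          rw [Finsupp.single_eq_same, tsub_add_cancel_of_le hr1]
        · rw [Finsupp.single_eq_of_ne' fun hh => h hh.symm, add_zero, tsub_zero]
      have hfr : frM μ = frM μ' := by rw [← hsum, frM_add_single]
      have hc : cM μ = cM μ' * r := by rw [← hsum, cM_add_single]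
      have hint : intM μ = intM μ' + Finsupp.single r 1 := by rw [← hsum, intM_add_single]
      have hn' : (intM μ').sum (fun _ k => k) < n := by
        rw [← hn, hint, Finsupp.sum_add_index' (fun _ => rfl) (fun _ _ _ => rfl),
          Finsupp.sum_single_index rfl]
        omega
      have hm : (AddMonoidAlgebra.single μ 1 : A R) =
          AddMonoidAlgebra.single μ' 1 *
            AddMonoidAlgebra.single (Finsupp.single r 1) 1 := by
        rw [AddMonoidAlgebra.single_mul_single, one_mul, hsum]
      rw [hm, map_mul, relS, mul_comm, ← Algebra.smul_def, IH _ hn' μ' rfl, hfr, hc,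
        smul_smul, mul_comm r (cM μ')]

lemma key (μ : M R) :
    mkS R (AddMonoidAlgebra.single μ 1) =
      cM μ • mkS R (AddMonoidAlgebra.single (frM μ) 1) :=
  key_aux _ μ rfl

variable (R) in
abbrev Mf : Type := {μ : M R // ∀ r, μ r < 1}

noncomputable def ιf (μ : M R) : Mf R := ⟨frM μ, frM_lt_one μ⟩

variable (R) in
noncomputable def Φ : A R →ₗ[R] (Mf R →₀ R) :=
  (Finsupp.lsum ℕ fun μ : M R => cM μ • Finsupp.lsingle (ιf μ)) ∘ₗ
    (AddMonoidAlgebra.coeffLinearEquiv R).toLinearMap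

lemma Φ_single (μ : M R) (t : R) :
    Φ R (AddMonoidAlgebra.single μ t) = Finsupp.single (ιf μ) (cM μ * t) := by
  refine (Finsupp.lsum_single (S := ℕ) (fun ν : M R => cM ν • Finsupp.lsingle (R := R) (ιf ν))
    μ t).trans ?_
  rw [LinearMap.smul_apply, Finsupp.lsingle_apply, Finsupp.smul_single, smul_eq_mul]

lemma Φ_J {x : A R} (hx : x ∈ J R) : Φ R x = 0 := by
  have main : ∀ y ∈ J R, ∀ a : A R, Φ R (a * y) = 0 := by
    intro y hy
    refine Submodule.span_induction ?_ ?_ ?_ ?_ hy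
    · rintro g ⟨r, rfl⟩ a
      induction a using AddMonoidAlgebra.induction_linear with
      | zero => rw [zero_mul, map_zero]
      | add f g hf hg => rw [add_mul, map_add, hf, hg, add_zero]
      | single μ t =>
        rw [mul_sub, AddMonoidAlgebra.single_mul_single,
          AddMonoidAlgebra.single_mul_single, map_sub, mul_one]
        rw [Φ_single, Φ_single, add_zero, cM_add_single]
        have hι : ιf (μ + Finsupp.single r 1) = ιf μ := Subtype.ext (frM_add_single μ r)
        have hco : cM μ * r * t = cM μ * (t * r) := by ring
        rw [hι, hco, sub_self]
    · intro a
      rw [mul_zero, map_zero]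
    · intro x y _ _ hx hy a
      rw [mul_add, map_add, hx, hy, add_zero]
    · intro c x _ hx a
      rw [smul_eq_mul, ← mul_assoc, hx]
  have := main x hx 1
  rwa [one_mul] at this


variable (R) in
noncomputable def L : (Mf R →₀ R) →ₗ[R] S R :=
  Finsupp.lsum ℕ fun φ : Mf R => (mkS R).toLinearMap ∘ₗ AddMonoidAlgebra.lsingle φ.1

lemma L_single (φ : Mf R) (t : R) :
    L R (Finsupp.single φ t) = mkS R (AddMonoidAlgebra.single φ.1 t) :=
  (Finsupp.lsum_single (S := ℕ) _ φ t).trans rfl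

lemma L_eq (x : Mf R →₀ R) :
    L R x = mkS R (AddMonoidAlgebra.ofCoeff (Finsupp.lmapDomain R R (Subtype.val) x)) := by
  induction x using Finsupp.induction_linear with
  | zero => rw [map_zero, map_zero, AddMonoidAlgebra.ofCoeff_zero, map_zero]
  | add f g hf hg => rw [map_add, map_add, AddMonoidAlgebra.ofCoeff_add, map_add, hf, hg]
  | single φ t =>
    rw [L_single, Finsupp.lmapDomain_apply, Finsupp.mapDomain_single]
    rfl

lemma Φ_mapDomain (x : Mf R →₀ R) :
    Φ R (AddMonoidAlgebra.ofCoeff (Finsupp.lmapDomain R R (Subtype.val) x)) = x := by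
  induction x using Finsupp.induction_linear with
  | zero => rw [map_zero, AddMonoidAlgebra.ofCoeff_zero, map_zero]
  | add f g hf hg => rw [map_add, AddMonoidAlgebra.ofCoeff_add, map_add, hf, hg]
  | single φ t =>
    rw [Finsupp.lmapDomain_apply, Finsupp.mapDomain_single]
    have h1 : Φ R (AddMonoidAlgebra.ofCoeff (Finsupp.single φ.1 t)) = Finsupp.single (ιf φ.1) (cM φ.1 * t) :=
      Φ_single φ.1 t
    rw [h1, cM_of_frac φ.2, one_mul]
    congr 1
    exact Subtype.ext (frM_of_frac φ.2)

lemma L_inj : Function.Injective (L R) := by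
  intro x y hxy
  have h := sub_eq_zero_of_eq hxy
  rw [← map_sub] at h
  set d := x - y with hd
  have h2 : mkS R (AddMonoidAlgebra.ofCoeff (Finsupp.lmapDomain R R (Subtype.val) d)) = 0 := by
    rw [← L_eq]; exact h
  have h3 : AddMonoidAlgebra.ofCoeff (Finsupp.lmapDomain R R (Subtype.val) d) ∈ J R := by
    rwa [mkS, Ideal.Quotient.mkₐ_eq_mk, Ideal.Quotient.eq_zero_iff_mem] at h2
  have h4 := Φ_J h3
  rw [Φ_mapDomain] at h4
  exact sub_eq_zero.1 h4

lemma L_surj : Function.Surjective (L R) := by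
  intro z
  obtain ⟨a, rfl⟩ := Ideal.Quotient.mkₐ_surjective R (J R) z
  show ∃ x, L R x = mkS R a
  induction a using AddMonoidAlgebra.induction_linear with
  | zero => exact ⟨0, by rw [map_zero, map_zero]⟩
  | add f g hf hg =>
    obtain ⟨u, hu⟩ := hf
    obtain ⟨v, hv⟩ := hg
    exact ⟨u + v, by rw [map_add, map_add, hu, hv]⟩
  | single ν t =>
    refine ⟨Finsupp.single (ιf ν) (t * cM ν), ?_⟩
    rw [L_single]
    show mkS R (AddMonoidAlgebra.single (frM ν) (t * cM ν)) =
      mkS R (AddMonoidAlgebra.single ν t)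
    have e1 : (AddMonoidAlgebra.single (frM ν) (t * cM ν) : A R) =
        (t * cM ν) • AddMonoidAlgebra.single (frM ν) 1 := by
      rw [AddMonoidAlgebra.smul_single', mul_one]
    have e2 : (AddMonoidAlgebra.single ν t : A R) = t • AddMonoidAlgebra.single ν 1 := by
      rw [AddMonoidAlgebra.smul_single', mul_one]
    rw [e1, e2, map_smul, map_smul, key ν, smul_smul]


lemma algS_inj : Function.Injective (algebraMap R (S R)) := by
  have hφ : ∀ r : R, ((0 : M R)) r < 1 := fun r => zero_lt_one
  intro a b h
  have h2 : L R (Finsupp.single ⟨0, hφ⟩ a) = L R (Finsupp.single ⟨0, hφ⟩ b) := by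
    rw [L_single, L_single]
    show mkS R (AddMonoidAlgebra.single 0 a) = mkS R (AddMonoidAlgebra.single 0 b)
    rw [← algebraMap_A, ← algebraMap_A, (mkS R).commutes, (mkS R).commutes]
    exact h
  exact Finsupp.single_injective _ (L_inj h2)

lemma integral_single_single (r : R) (q : ℚ≥0) :
    IsIntegral R (mkS R (AddMonoidAlgebra.single (Finsupp.single r q) 1)) := by
  have hz : mkS R (AddMonoidAlgebra.single (Finsupp.single r q) 1) ^ q.den
      = algebraMap R (S R) (r ^ q.num) := by
    rw [← map_pow, AddMonoidAlgebra.single_pow, one_pow]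
    have h1 : q.den • Finsupp.single r q = Finsupp.single r ((q.num : ℚ≥0)) := by
      rw [Finsupp.smul_single]
      congr 1
      rw [nsmul_eq_mul]
      exact_mod_cast NNRat.den_mul_eq_num q
    have h2 : Finsupp.single r ((q.num : ℚ≥0)) = q.num • Finsupp.single r (1 : ℚ≥0) := by
      rw [Finsupp.smul_single, nsmul_eq_mul, mul_one]
    rw [h1, h2, ← one_pow (M := R) q.num, ← AddMonoidAlgebra.single_pow, map_pow,
      relS, ← map_pow]
  refine ⟨Polynomial.X ^ q.den - Polynomial.C (r ^ q.num),
    Polynomial.monic_X_pow_sub_C _ q.den_ne_zero, ?_⟩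
  simp only [Polynomial.eval₂_sub, Polynomial.eval₂_X_pow, Polynomial.eval₂_C]
  rw [hz, sub_self]

lemma integral_monomial (ν : M R) : IsIntegral R (mkS R (AddMonoidAlgebra.single ν 1)) := by
  induction ν using Finsupp.induction with
  | zero =>
    have h : (AddMonoidAlgebra.single (0 : M R) (1 : R) : A R) = 1 := rfl
    rw [h, map_one]
    exact isIntegral_one
  | single_add r q ν hν hq IH =>
    have h : (AddMonoidAlgebra.single (Finsupp.single r q + ν) (1 : R) : A R)
        = AddMonoidAlgebra.single (Finsupp.single r q) 1 * AddMonoidAlgebra.single ν 1 := by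
      rw [AddMonoidAlgebra.single_mul_single, one_mul]
    rw [h, map_mul]
    exact (integral_single_single r q).mul IH

lemma isIntegralS : Algebra.IsIntegral R (S R) := by
  constructor
  intro x
  obtain ⟨a, rfl⟩ := Ideal.Quotient.mkₐ_surjective R (J R) x
  show IsIntegral R (mkS R a)
  induction a using AddMonoidAlgebra.induction_linear with
  | zero => rw [map_zero]; exact isIntegral_zero
  | add f g hf hg => rw [map_add]; exact hf.add hg
  | single ν t =>
    show IsIntegral R (mkS R (AddMonoidAlgebra.single ν t))
    have e : (AddMonoidAlgebra.single ν t : A R) =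
        AddMonoidAlgebra.single 0 t * AddMonoidAlgebra.single ν 1 := by
      rw [AddMonoidAlgebra.single_mul_single, zero_add, mul_one]
    rw [e, map_mul, ← algebraMap_A, (mkS R).commutes]
    exact (isIntegral_algebraMap).mul (integral_monomial ν)

lemma spec_surj : Function.Surjective (PrimeSpectrum.comap (algebraMap R (S R))) := by
  haveI := isIntegralS (R := R)
  intro x
  have hker : (⊥ : Ideal (S R)).comap (algebraMap R (S R)) ≤ x.asIdeal := by
    intro a ha
    have h0 : algebraMap R (S R) a = 0 := by rwa [Ideal.mem_comap, Ideal.mem_bot] at ha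
    have h1 : a = 0 := algS_inj (by rw [h0, map_zero])
    rw [h1]
    exact Ideal.zero_mem _
  obtain ⟨Q, _, hQp, hQ⟩ := Ideal.exists_ideal_over_prime_of_isIntegral x.asIdeal ⊥ hker
  exact ⟨⟨Q, hQp⟩, PrimeSpectrum.ext hQ⟩

noncomputable def pdiv (p : ℕ) (μ : M R) : M R := μ.mapRange (· / (p : ℚ≥0)) (by simp)

lemma pdiv_smul {p : ℕ} (hp : p ≠ 0) (μ : M R) : p • pdiv p μ = μ := by
  ext s
  rw [Finsupp.smul_apply]
  have hs : pdiv p μ s = μ s / (p : ℚ≥0) := rfl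
  have hp' : ((p : ℚ≥0)) ≠ 0 := by exact_mod_cast hp
  rw [hs, nsmul_eq_mul]
  field_simp

lemma frob_surj (p : ℕ) (hp : p.Prime) :
    Function.Surjective (fun x : S R ⧸ Ideal.span {(p : S R)} => x ^ p) := by
  have hpz : ((p : ℕ) : S R ⧸ Ideal.span {(p : S R)}) = 0 := by
    rw [← map_natCast (Ideal.Quotient.mk (Ideal.span {(p : S R)}))]
    exact Ideal.Quotient.eq_zero_iff_mem.2 (Ideal.mem_span_singleton_self _)
  intro z
  obtain ⟨y, rfl⟩ := Ideal.Quotient.mk_surjective z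
  obtain ⟨a, rfl⟩ := Ideal.Quotient.mkₐ_surjective R (J R) y
  show ∃ u, u ^ p = Ideal.Quotient.mk _ (mkS R a)
  induction a using AddMonoidAlgebra.induction_linear with
  | zero => exact ⟨0, by rw [map_zero, map_zero]; exact zero_pow (M₀ := S R ⧸ Ideal.span {(p : S R)}) hp.ne_zero⟩
  | add f g hf hg =>
    obtain ⟨u, hu⟩ := hf
    obtain ⟨v, hv⟩ := hg
    refine ⟨u + v, ?_⟩
    have hgoal : (u + v) ^ p = u ^ p + v ^ p := by
      have h := add_pow_prime_eq hp u v
      have hz : ((p : ℕ) : S R ⧸ Ideal.span {(p : S R)}) * u * v *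
          (∑ k ∈ Finset.Ioo 0 p, u ^ (k - 1) * v ^ (p - k - 1) *
            ((p.choose k / p : ℕ) : S R ⧸ Ideal.span {(p : S R)})) = 0 :=
        mul_eq_zero_of_left (M₀ := S R ⧸ Ideal.span {(p : S R)})
          (mul_eq_zero_of_left (M₀ := S R ⧸ Ideal.span {(p : S R)})
            (mul_eq_zero_of_left (M₀ := S R ⧸ Ideal.span {(p : S R)}) hpz u) v) _
      exact h.trans ((congrArg _ hz).trans (add_zero _))
    rw [hgoal, hu, hv, ← map_add (Ideal.Quotient.mk (Ideal.span {((p : ℕ) : S R)}))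
      (mkS R f) (mkS R g)]
    exact congrArg _ (map_add (mkS R) f g).symm
  | single ν t =>
    have h1 : mkS R (AddMonoidAlgebra.single ν t) =
        mkS R (AddMonoidAlgebra.single (Finsupp.single t 1 + ν) 1) := by
      have e1 : (AddMonoidAlgebra.single ν t : A R) =
          AddMonoidAlgebra.single 0 t * AddMonoidAlgebra.single ν 1 := by
        rw [AddMonoidAlgebra.single_mul_single, zero_add, mul_one]
      rw [e1, map_mul, ← algebraMap_A, (mkS R).commutes, ← relS,
        ← map_mul, AddMonoidAlgebra.single_mul_single, one_mul]
    refine ⟨Ideal.Quotient.mk _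
      (mkS R (AddMonoidAlgebra.single (pdiv p (Finsupp.single t 1 + ν)) 1)), ?_⟩
    rw [← map_pow, ← map_pow, AddMonoidAlgebra.single_pow, one_pow, pdiv_smul hp.ne_zero, h1]

end St3

theorem statement_3 (p : ℕ) [Fact p.Prime] (R : Type) [CommRing R] :
    ∃ (S : Type) (_ : CommRing S) (f : R →+* S),
      (letI := f.toAlgebra; Module.Flat R S) ∧
      Function.Surjective (PrimeSpectrum.comap f) ∧
      Function.Surjective (fun x : S ⧸ Ideal.span {(p : S)} => x ^ p) := by
  refine ⟨St3.S R, inferInstance, algebraMap R (St3.S R), ?_, St3.spec_surj,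
    St3.frob_surj p Fact.out⟩
  haveI hfree : Module.Free R (St3.S R) :=
    Module.Free.of_equiv (LinearEquiv.ofBijective (St3.L R) ⟨St3.L_inj, St3.L_surj⟩)
  haveI hflat : Module.Flat R (St3.S R) := inferInstance
  have hmod : (@Algebra.toModule R (St3.S R) _ _ (RingHom.toAlgebra (algebraMap R (St3.S R))))
      = (inferInstance : Module R (St3.S R)) := by
    apply Module.ext'
    intro r m
    show algebraMap R (St3.S R) r * m = r • m
    exact (Algebra.smul_def r m).symm
  show @Module.Flat R (St3.S R) _ _
    (@Algebra.toModule R (St3.S R) _ _ (RingHom.toAlgebra (algebraMap R (St3.S R))))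
  rw [hmod]
  exact hflat
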